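/- Let X, Y be metric spaces, let f : X → Y be continuous on X, let p ∈ X and ε > 0, and suppose f⁻¹(S[f(p),ε]) is nonempty, so that δ(p,ε) := dist(p, f⁻¹(S[f(p),ε])) is a well-defined positive number. If the open ball B(p, δ(p,ε)) is path-connected, then δ(p,ε) is a delta-epsilon number for f at p: for every x ∈ X with d_X(x,p) < δ(p,ε) one has d_Y(f(x),f(p)) < ε. -/

import Mathlib

/-- If `f : X → Y` is continuous, `ε > 0`, the preimage of the sphere `S[f p, ε]`
is nonempty, and the open ball `B(p, δ(p,ε))` is path-connected, where
`δ(p,ε) = dist(p, f⁻¹(S[f p, ε]))`, then `δ(p,ε)` is a delta-epsilon number for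
`f` at `p`. -/
theorem delta_is_delta_epsilon_number {X Y : Type*} [MetricSpace X] [MetricSpace Y]
    (f : X → Y) (hf : Continuous f) (p : X) (ε : ℝ) (hε : 0 < ε)
    (hne : (f ⁻¹' Metric.sphere (f p) ε).Nonempty)
    (δ : ℝ) (hδ : δ = Metric.infDist p (f ⁻¹' Metric.sphere (f p) ε))
    (hball : IsPathConnected (Metric.ball p δ)) :
    ∀ x : X, dist x p < δ → dist (f x) (f p) < ε := by
  intro x hx
  -- points in the ball are not in the preimage of the sphere
  have hnotin : ∀ z : X, dist z p < δ → dist (f z) (f p) ≠ ε := by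
    intro z hz hdz
    have : δ ≤ dist p z := by
      rw [hδ]
      exact Metric.infDist_le_dist_of_mem (by simpa using hdz)
    rw [dist_comm] at hz
    linarith
  have hpδ : 0 < δ := lt_of_le_of_lt dist_nonneg hx
  have hpmem : p ∈ Metric.ball p δ := Metric.mem_ball_self hpδ
  have hxmem : x ∈ Metric.ball p δ := by simpa [Metric.mem_ball] using hx
  obtain ⟨γ, hγ⟩ := hball.joinedIn p hpmem x hxmem
  by_contra hcon
  push_neg at hcon
  -- consider g : ℝ → ℝ, g t = dist (f (γ.extend t)) (f p)
  set g : ℝ → ℝ := fun t => dist (f (γ.extend t)) (f p) with hg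
  have hgc : Continuous g := (continuous_dist.comp
    ((hf.comp γ.continuous_extend).prodMk continuous_const))
  have h0 : g 0 = 0 := by simp [hg, γ.extend_zero]
  have h1 : g 1 = dist (f x) (f p) := by simp [hg, γ.extend_one]
  have : ε ∈ Set.Icc (g 0) (g 1) := by
    rw [h0, h1]; exact ⟨le_of_lt hε, hcon⟩
  obtain ⟨t, ht, hgt⟩ := intermediate_value_Icc (by norm_num : (0:ℝ) ≤ 1)
    (hgc.continuousOn) this
  have hmem : γ.extend t ∈ Metric.ball p δ := by
    rw [γ.extend_apply ht]
    exact hγ ⟨t, ht⟩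
  exact hnotin _ (by simpa [Metric.mem_ball] using hmem) hgt
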